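/- The generating functions H_b satisfy H_b(x) = (x^b/(1−x^b)) · (Σ_{i=1}^{b−1} (2(b−i)+1) H_i(x) + 1) for all b ≥ 1. -/

import Mathlib

/-- `hFun b n` is the number of `(n,b)`-domino stacks, defined by the recurrence
`h_b(n) = Σ_{i=1}^{b} (2(b-i)+1) h_i(n-b)` with `h_b(b) = 1` and `h_b(n) = 0`
when `n < 1`, `b < 1`, or `n < b`. -/
def hFun : ℕ → ℕ → ℕ
  | b, n =>
    if b = 0 ∨ n ≤ b then (if n = b ∧ 1 ≤ b then 1 else 0)
    else ∑ i ∈ Finset.Icc 1 b, (2 * (b - i) + 1) * hFun i (n - b)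
termination_by b n => n
decreasing_by omega

open PowerSeries

lemma hFun_zero (i : ℕ) (hi : 1 ≤ i) : hFun i 0 = 0 := by
  rw [hFun]
  simp; omega

lemma key (b : ℕ) (hb : 1 ≤ b) :
    PowerSeries.mk (fun n => (hFun b n : ℚ)) * (1 - (X : PowerSeries ℚ) ^ b) =
      (X : PowerSeries ℚ) ^ b *
        ((∑ i ∈ Finset.Icc 1 (b - 1),
          ((2 * (b - i) + 1 : ℕ) : PowerSeries ℚ) * PowerSeries.mk (fun n => (hFun i n : ℚ))) + 1) := by
  ext n
  rw [mul_sub, mul_one, map_sub, PowerSeries.coeff_mul_X_pow',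
    mul_comm ((X : PowerSeries ℚ) ^ b), PowerSeries.coeff_mul_X_pow']
  simp only [coeff_mk, map_add, map_sum, PowerSeries.coeff_one]
  by_cases hn : b ≤ n
  · simp only [hn, if_true]
    have hcast : ∀ i : ℕ, (PowerSeries.coeff (R := ℚ) (n - b))
        (((2 * (b - i) + 1 : ℕ) : PowerSeries ℚ) * PowerSeries.mk (fun m => (hFun i m : ℚ)))
        = ((2 * (b - i) + 1 : ℕ) : ℚ) * (hFun i (n - b) : ℚ) := by
      intro i
      rw [(map_natCast (PowerSeries.C (R := ℚ)) (2 * (b - i) + 1)).symm, PowerSeries.coeff_C_mul,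
        PowerSeries.coeff_mk]
    simp only [hcast]
    rcases eq_or_lt_of_le hn with h | h
    · subst h
      rw [hFun]
      simp only [Nat.sub_self]
      have : ∀ i ∈ Finset.Icc 1 (b-1), ((2 * (b - i) + 1 : ℕ) : ℚ) * (hFun i 0 : ℚ) = 0 := by
        intro i hi
        rw [hFun_zero i (Finset.mem_Icc.mp hi).1]; simp
      rw [Finset.sum_congr rfl this]
      simp [hb, hFun_zero b hb]
    · -- n > b
      rw [hFun]
      have hcond : ¬ (b = 0 ∨ n ≤ b) := by omega
      rw [if_neg hcond]
      have hsplit : Finset.Icc 1 b = insert b (Finset.Icc 1 (b-1)) := by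
        ext i; simp [Finset.mem_Icc, Finset.mem_insert]; omega
      rw [hsplit, Finset.sum_insert (by simp [Finset.mem_Icc]; omega)]
      push_cast
      have h0 : n - b ≠ 0 := by omega
      simp [h0]
  · simp only [hn, if_false]
    rw [hFun]
    have : b = 0 ∨ n ≤ b := by omega
    rw [if_pos this, if_neg (by omega)]
    simp

/-- The generating functions `H_b(x) = Σ_{n≥0} h_b(n) xⁿ` satisfy
`H_b(x) = (x^b/(1-x^b)) (Σ_{i=1}^{b-1} (2(b-i)+1) H_i(x) + 1)` for all `b ≥ 1`. -/
theorem domino_stack_genFun_eq (b : ℕ) (hb : 1 ≤ b) :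
    PowerSeries.mk (fun n => (hFun b n : ℚ)) =
      (X : PowerSeries ℚ) ^ b * (1 - (X : PowerSeries ℚ) ^ b)⁻¹ *
        ((∑ i ∈ Finset.Icc 1 (b - 1),
          ((2 * (b - i) + 1 : ℕ) : PowerSeries ℚ) * PowerSeries.mk (fun n => (hFun i n : ℚ))) + 1) := by
  have hu : PowerSeries.constantCoeff (R := ℚ) (1 - (X : PowerSeries ℚ) ^ b) ≠ 0 := by
    rw [map_sub, map_one, map_pow, PowerSeries.constantCoeff_X, zero_pow (by omega : b ≠ 0)]
    norm_num
  have h := key b hb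
  have hinv : (1 - (X : PowerSeries ℚ) ^ b) * (1 - (X : PowerSeries ℚ) ^ b)⁻¹ = 1 :=
    PowerSeries.mul_inv_cancel _ hu
  calc PowerSeries.mk (fun n => (hFun b n : ℚ))
      = PowerSeries.mk (fun n => (hFun b n : ℚ)) * ((1 - (X : PowerSeries ℚ) ^ b) * (1 - (X : PowerSeries ℚ) ^ b)⁻¹) := by rw [hinv, mul_one]
    _ = (PowerSeries.mk (fun n => (hFun b n : ℚ)) * (1 - (X : PowerSeries ℚ) ^ b)) * (1 - (X : PowerSeries ℚ) ^ b)⁻¹ := by ring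
    _ = _ := by rw [h]; ring
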